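/- Suppose τ(x) = c·x² + O(x⁴) as x → 0⁺ with 0 ≤ τ ≤ 1 on [0,∞). Then β² · (2/β) ∫_0^∞ τ(√(z/β)) e^z/(1+e^z)² dz/(2π) → (c/π) ln 2 as β → ∞; i.e. the μ=0 thermal noise behaves as (c ln2)/(π β²). -/

import Mathlib

open MeasureTheory Real Filter Asymptotics Topology

lemma aux_w_nonneg (z : ℝ) : 0 ≤ Real.exp z / (1 + Real.exp z)^2 := by positivity

lemma aux_w_le (z : ℝ) : Real.exp z / (1 + Real.exp z)^2 ≤ Real.exp (-z) := by
  have h1 : (0:ℝ) < Real.exp z := Real.exp_pos z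
  have h2 : (Real.exp z)^2 ≤ (1 + Real.exp z)^2 := by nlinarith
  calc Real.exp z / (1 + Real.exp z)^2 ≤ Real.exp z / (Real.exp z)^2 :=
        div_le_div_of_nonneg_left h1.le (by positivity) h2
    _ = Real.exp (-z) := by rw [Real.exp_neg, sq]; field_simp

lemma aux_integrable (n : ℕ) :
    IntegrableOn (fun z : ℝ => z^n * (Real.exp z / (1 + Real.exp z)^2)) (Set.Ioi 0) := by
  apply integrable_of_isBigO_exp_neg (b := 1/2) (by norm_num)
  · apply Continuous.continuousOn
    exact (continuous_pow n).mul (Real.continuous_exp.div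
      (by continuity) (fun x => by positivity))
  · have hh : Tendsto (fun z : ℝ => z^n * Real.exp (-(z/2))) atTop (𝓝 0) := by
      have h0 := (tendsto_pow_mul_exp_neg_atTop_nhds_zero n).comp
        (tendsto_id.atTop_div_const (by norm_num : (0:ℝ) < 2))
      have h1 := h0.const_mul ((2:ℝ)^n)
      simp only [mul_zero] at h1
      refine h1.congr (fun z => ?_)
      simp only [Function.comp]
      rw [div_pow]
      field_simp
      rfl
    apply Asymptotics.IsBigO.of_bound 1
    filter_upwards [hh.eventually (eventually_le_nhds (by norm_num : (0:ℝ) < 1)),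
      eventually_ge_atTop (0:ℝ)] with z hz hz0
    have hwn := aux_w_nonneg z
    have hwl := aux_w_le z
    have hzn : (0:ℝ) ≤ z^n := pow_nonneg hz0 n
    have hsplit : Real.exp (-z) = Real.exp (-(z/2)) * Real.exp (-(z/2)) := by
      rw [← Real.exp_add]; ring_nf
    rw [Real.norm_of_nonneg (by positivity), Real.norm_of_nonneg (Real.exp_pos _).le, one_mul]
    have : z^n * (Real.exp z / (1 + Real.exp z)^2) ≤ z^n * Real.exp (-z) :=
      mul_le_mul_of_nonneg_left hwl hzn
    calc z^n * (Real.exp z / (1 + Real.exp z)^2) ≤ z^n * Real.exp (-z) := this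
      _ = (z^n * Real.exp (-(z/2))) * Real.exp (-(z/2)) := by rw [hsplit]; ring
      _ ≤ 1 * Real.exp (-(z/2)) :=
          mul_le_mul_of_nonneg_right hz (Real.exp_pos _).le
      _ = Real.exp (-(1/2) * z) := by rw [one_mul]; ring_nf

lemma aux_ln2 : ∫ z in Set.Ioi (0:ℝ), z * Real.exp z / (1 + Real.exp z)^2 = Real.log 2 := by
  set f : ℝ → ℝ := fun z => -z/(1 + Real.exp z) - Real.log (1 + Real.exp (-z)) with hf
  have hderiv : ∀ x : ℝ, HasDerivAt f (x * Real.exp x / (1 + Real.exp x)^2) x := by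
    intro x
    have hne : (1:ℝ) + Real.exp x ≠ 0 := by positivity
    have hne' : (1:ℝ) + Real.exp (-x) ≠ 0 := by positivity
    have h1 : HasDerivAt (fun z : ℝ => -z/(1 + Real.exp z))
        (((-1) * (1 + Real.exp x) - (-x) * Real.exp x) / (1 + Real.exp x)^2) x :=
      HasDerivAt.div (hasDerivAt_id x).neg ((Real.hasDerivAt_exp x).const_add 1) hne
    have hinner : HasDerivAt (fun z : ℝ => 1 + Real.exp (-z)) (-Real.exp (-x)) x := by
      have h := (Real.hasDerivAt_exp (-x)).comp x (hasDerivAt_id x).neg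
      simpa using h.const_add 1
    have h2 : HasDerivAt (fun z : ℝ => Real.log (1 + Real.exp (-z)))
        ((-Real.exp (-x)) / (1 + Real.exp (-x))) x := hinner.log hne'
    have h3 := h1.sub h2
    refine h3.congr_deriv ?_
    have hex := Real.exp_ne_zero x
    rw [Real.exp_neg]
    field_simp
    ring
  have hcont : ContinuousWithinAt f (Set.Ici 0) 0 :=
    ((hderiv 0).differentiableAt.continuousAt).continuousWithinAt
  have hint : IntegrableOn (fun z : ℝ => z * Real.exp z / (1 + Real.exp z)^2) (Set.Ioi 0) := by
    have := aux_integrable 1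
    simpa [pow_one, mul_div_assoc] using this
  have htend : Tendsto f atTop (𝓝 0) := by
    have hA : Tendsto (fun z : ℝ => -z/(1 + Real.exp z)) atTop (𝓝 0) := by
      have hb : Tendsto (fun z : ℝ => z * Real.exp (-z)) atTop (𝓝 0) := by
        simpa using tendsto_pow_mul_exp_neg_atTop_nhds_zero 1
      apply squeeze_zero_norm' ?_ hb
      filter_upwards [eventually_ge_atTop (0:ℝ)] with z hz
      have hp : (0:ℝ) < 1 + Real.exp z := by positivity
      have key : Real.exp (-z) * Real.exp z = 1 := by rw [← Real.exp_add]; simp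
      have h1 : z / (1 + Real.exp z) ≤ z * Real.exp (-z) := by
        rw [div_le_iff₀ hp]
        nlinarith [mul_nonneg hz (Real.exp_pos (-z)).le]
      calc ‖-z/(1 + Real.exp z)‖ = z/(1 + Real.exp z) := by
            rw [norm_div, norm_neg, Real.norm_of_nonneg hz, Real.norm_of_nonneg hp.le]
        _ ≤ z * Real.exp (-z) := h1
    have hB : Tendsto (fun z : ℝ => Real.log (1 + Real.exp (-z))) atTop (𝓝 0) := by
      have h1 : Tendsto (fun z : ℝ => 1 + Real.exp (-z)) atTop (𝓝 1) := by
        simpa using tendsto_const_nhds.add Real.tendsto_exp_neg_atTop_nhds_zero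
      have h2 := ((Real.continuousAt_log (by norm_num : (1:ℝ) ≠ 0)).tendsto).comp h1
      simpa [Function.comp_def] using h2
    have := hA.sub hB
    simpa using this
  have key := integral_Ioi_of_hasDerivAt_of_tendsto hcont (fun x _ => hderiv x) hint htend
  rw [key, hf]
  norm_num [Real.exp_zero]

set_option maxHeartbeats 1600000 in
theorem stmt16 (τ : ℝ → ℝ) (hmeas : Measurable τ)
    (hτ : ∀ x : ℝ, 0 ≤ x → 0 ≤ τ x ∧ τ x ≤ 1)
    (c : ℝ) (hc : 0 ≤ c)
    (hasymp : (fun x : ℝ => τ x - c * x^2) =O[nhdsWithin 0 (Set.Ioi 0)] (fun x : ℝ => x^4)) :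
    Tendsto (fun β : ℝ => β^2 * ((2/β) * ((1/(2*Real.pi)) *
        ∫ z in Set.Ioi (0:ℝ), τ (Real.sqrt (z/β)) * Real.exp z / (1 + Real.exp z)^2)))
      atTop (𝓝 ((c/Real.pi) * Real.log 2)) := by
  obtain ⟨C0, hC0⟩ := hasymp.bound
  rw [eventually_nhdsWithin_iff, Metric.eventually_nhds_iff] at hC0
  obtain ⟨δ, hδ, hC0⟩ := hC0
  set C := max C0 0 with hC
  have hCnn : 0 ≤ C := le_max_right _ _
  have hkey : ∀ x : ℝ, 0 < x → x < δ → |τ x - c * x^2| ≤ C * x^4 := by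
    intro x hx hxδ
    have hd : dist x 0 < δ := by rw [Real.dist_eq, sub_zero, abs_of_pos hx]; exact hxδ
    have := hC0 hd hx
    rw [Real.norm_eq_abs, Real.norm_eq_abs] at this
    have hx4 : |x^4| = x^4 := abs_of_nonneg (by positivity)
    rw [hx4] at this
    calc |τ x - c * x^2| ≤ C0 * x^4 := this
      _ ≤ C * x^4 := mul_le_mul_of_nonneg_right (le_max_left _ _) (by positivity)
  set F : ℝ → ℝ → ℝ := fun β z =>
    β * (τ (Real.sqrt (z/β)) * Real.exp z / (1 + Real.exp z)^2) with hF
  set g : ℝ → ℝ := fun z =>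
    (c + δ⁻¹^2) * (z^1 * (Real.exp z / (1 + Real.exp z)^2))
      + C * (z^2 * (Real.exp z / (1 + Real.exp z)^2)) with hg
  set limfn : ℝ → ℝ := fun z => c * (z * Real.exp z / (1 + Real.exp z)^2) with hlim
  have hδ2 : (0:ℝ) < δ^2 := by positivity
  -- dominated convergence
  have hDCT : Tendsto (fun β : ℝ => ∫ z in Set.Ioi (0:ℝ), F β z) atTop
      (𝓝 (∫ z in Set.Ioi (0:ℝ), limfn z)) := by
    apply tendsto_integral_filter_of_dominated_convergence g
    · filter_upwards with β
      have hs : Measurable fun z : ℝ => Real.sqrt (z/β) :=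
        Real.continuous_sqrt.measurable.comp (measurable_id.div_const β)
      exact (measurable_const.mul (((hmeas.comp hs).mul Real.measurable_exp).div
        ((measurable_const.add Real.measurable_exp).pow_const 2))).aestronglyMeasurable
    · filter_upwards [eventually_ge_atTop (1:ℝ)] with β hβ1
      have hβ0 : (0:ℝ) < β := lt_of_lt_of_le one_pos hβ1
      rw [ae_restrict_iff' measurableSet_Ioi]
      filter_upwards with z hz
      have hzpos : (0:ℝ) < z := hz
      set x := Real.sqrt (z/β) with hx
      have hxnn : 0 ≤ x := Real.sqrt_nonneg _
      have hτ0 := (hτ x hxnn).1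
      have hτ1 := (hτ x hxnn).2
      have hw0 := aux_w_nonneg z
      have hxsq : x^2 = z/β := Real.sq_sqrt (by positivity)
      have hFz : F β z = (β * τ x) * (Real.exp z / (1 + Real.exp z)^2) := by
        rw [hF]; ring
      have hbound : β * τ x ≤ (c + δ⁻¹^2) * z + C * z^2 := by
        by_cases hcase : z/β < δ^2
        · have hxδ : x < δ := by
            rw [hx]
            calc Real.sqrt (z/β) < Real.sqrt (δ^2) :=
                  Real.sqrt_lt_sqrt (by positivity) hcase
              _ = δ := Real.sqrt_sq hδ.le
          have hxpos : 0 < x := Real.sqrt_pos.mpr (by positivity)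
          have habs := hkey x hxpos hxδ
          have hτle : τ x ≤ c * x^2 + C * x^4 := by
            have := abs_le.mp habs
            linarith [this.2]
          have hx4 : x^4 = (z/β)^2 := by
            have : x^4 = (x^2)^2 := by ring
            rw [this, hxsq]
          have h1 : β * τ x ≤ β * (c * (z/β) + C * (z/β)^2) := by
            apply mul_le_mul_of_nonneg_left _ hβ0.le
            rw [← hx4, ← hxsq]; exact hτle
          have h2 : β * (c * (z/β) + C * (z/β)^2) = c * z + C * z^2 / β := by
            field_simp
          have h3 : C * z^2 / β ≤ C * z^2 := div_le_self (by positivity) hβ1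
          have h4 : 0 ≤ δ⁻¹^2 * z := by positivity
          nlinarith
        · push_neg at hcase
          have hβle : β ≤ z * δ⁻¹^2 := by
            rw [le_div_iff₀ hβ0] at hcase
            rw [inv_pow, ← div_eq_mul_inv, le_div_iff₀ hδ2]
            linarith
          have : β * τ x ≤ β := by nlinarith
          nlinarith [mul_nonneg hc hzpos.le, mul_nonneg hCnn (sq_nonneg z)]
      rw [hFz, hg, Real.norm_of_nonneg (by positivity)]
      have := mul_le_mul_of_nonneg_right hbound hw0
      calc β * τ x * (Real.exp z / (1 + Real.exp z)^2)
          ≤ ((c + δ⁻¹^2) * z + C * z^2) * (Real.exp z / (1 + Real.exp z)^2) := this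
        _ = (c + δ⁻¹^2) * (z^1 * (Real.exp z / (1 + Real.exp z)^2))
              + C * (z^2 * (Real.exp z / (1 + Real.exp z)^2)) := by ring
    · exact (((aux_integrable 1).const_mul _).add ((aux_integrable 2).const_mul _))
    · rw [ae_restrict_iff' measurableSet_Ioi]
      filter_upwards with z hz
      have hzpos : (0:ℝ) < z := hz
      have hw0 := aux_w_nonneg z
      have hdiff : Tendsto (fun β : ℝ => F β z - limfn z) atTop (𝓝 0) := by
        have hb : Tendsto (fun β : ℝ => C * z^2 * (Real.exp z / (1 + Real.exp z)^2) / β)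
            atTop (𝓝 0) := tendsto_const_nhds.div_atTop tendsto_id
        refine squeeze_zero_norm' ?_ hb
        · filter_upwards [eventually_gt_atTop (max 1 (z/δ^2))] with β hβ
          have hβ1 : (1:ℝ) < β := lt_of_le_of_lt (le_max_left _ _) hβ
          have hβ0 : (0:ℝ) < β := lt_trans one_pos hβ1
          have hβδ : z/δ^2 < β := lt_of_le_of_lt (le_max_right _ _) hβ
          have hcase : z/β < δ^2 := by
            rw [div_lt_iff₀ hβ0]
            rw [div_lt_iff₀ hδ2] at hβδ
            linarith
          set x := Real.sqrt (z/β) with hx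
          have hxpos : 0 < x := Real.sqrt_pos.mpr (by positivity)
          have hxsq : x^2 = z/β := Real.sq_sqrt (by positivity)
          have hxδ : x < δ := by
            rw [hx]
            calc Real.sqrt (z/β) < Real.sqrt (δ^2) :=
                  Real.sqrt_lt_sqrt (by positivity) hcase
              _ = δ := Real.sqrt_sq hδ.le
          have habs := hkey x hxpos hxδ
          have hx4 : x^4 = (z/β)^2 := by
            have : x^4 = (x^2)^2 := by ring
            rw [this, hxsq]
          have heq : F β z - limfn z
              = (β * (τ x - c * x^2)) * (Real.exp z / (1 + Real.exp z)^2) := by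
            rw [hF, hlim]
            simp only [← hx]
            rw [hxsq]
            field_simp
          rw [heq, norm_mul, norm_mul, Real.norm_of_nonneg hβ0.le,
            Real.norm_of_nonneg hw0]
          have hstep : β * ‖τ x - c * x^2‖ ≤ C * z^2 / β := by
            rw [Real.norm_eq_abs]
            calc β * |τ x - c * x^2| ≤ β * (C * x^4) :=
                  mul_le_mul_of_nonneg_left habs hβ0.le
              _ = C * z^2 / β := by rw [hx4]; field_simp
          calc β * ‖τ x - c * x^2‖ * (Real.exp z / (1 + Real.exp z)^2)
              ≤ (C * z^2 / β) * (Real.exp z / (1 + Real.exp z)^2) :=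
                mul_le_mul_of_nonneg_right hstep hw0
            _ = C * z^2 * (Real.exp z / (1 + Real.exp z)^2) / β := by ring
      have := hdiff.add (tendsto_const_nhds (x := limfn z))
      simpa using this
  have hIlim : ∫ z in Set.Ioi (0:ℝ), limfn z = c * Real.log 2 := by
    rw [hlim, MeasureTheory.integral_const_mul, aux_ln2]
  rw [hIlim] at hDCT
  have hfinal := hDCT.const_mul (Real.pi⁻¹)
  have hconst : (c/Real.pi) * Real.log 2 = Real.pi⁻¹ * (c * Real.log 2) := by ring
  rw [hconst]
  apply hfinal.congr'
  filter_upwards [eventually_gt_atTop (0:ℝ)] with β hβ0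
  rw [hF]
  rw [MeasureTheory.integral_const_mul]
  have hπ : Real.pi ≠ 0 := Real.pi_ne_zero
  field_simp
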